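/- Let f : ℝ → ℝ, f(t) = (1 + t/(e−1))(1 − e^{−t}) − t. Then f(0) = 0, f'(0) = 0, f''(t) = e^{−t}(3 − e − t)/(e−1), f is convex on [0, 3−e] and concave on [3−e, 1], and f(t) ≥ 0 for every t ∈ [0, 1]. -/

import Mathlib

/-- The auxiliary function `f` from Lemma 4 of the paper. -/
noncomputable def f (t : ℝ) : ℝ :=
  (1 + t / (Real.exp 1 - 1)) * (1 - Real.exp (-t)) - t

noncomputable def g (t : ℝ) : ℝ :=
  (1 - Real.exp (-t)) / (Real.exp 1 - 1) + (1 + t / (Real.exp 1 - 1)) * Real.exp (-t) - 1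

lemma he1 : (0:ℝ) < Real.exp 1 - 1 := by
  have := Real.exp_one_gt_d9; linarith

lemma hexp' (t : ℝ) : HasDerivAt (fun t : ℝ => Real.exp (-t)) (-Real.exp (-t)) t := by
  have h := ((hasDerivAt_neg t).exp)
  simpa using h

lemma hf_deriv (t : ℝ) : HasDerivAt f (g t) t := by
  have h1 : HasDerivAt (fun t : ℝ => 1 + t / (Real.exp 1 - 1)) (1 / (Real.exp 1 - 1)) t := by
    simpa using ((hasDerivAt_id t).div_const (Real.exp 1 - 1)).const_add 1
  have h2 : HasDerivAt (fun t : ℝ => 1 - Real.exp (-t)) (Real.exp (-t)) t := by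
    simpa using (hexp' t).const_sub 1
  have h := (h1.mul h2).sub (hasDerivAt_id t)
  have heq : 1 / (Real.exp 1 - 1) * (1 - Real.exp (-t)) +
      (1 + t / (Real.exp 1 - 1)) * Real.exp (-t) - 1 = g t := by
    unfold g; ring
  rw [← heq]
  exact h

lemma deriv_f_eq : deriv f = g := funext fun t => (hf_deriv t).deriv

lemma hg_deriv (t : ℝ) :
    HasDerivAt g (Real.exp (-t) * (3 - Real.exp 1 - t) / (Real.exp 1 - 1)) t := by
  have h1 : HasDerivAt (fun t : ℝ => (1 - Real.exp (-t)) / (Real.exp 1 - 1))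
      (Real.exp (-t) / (Real.exp 1 - 1)) t := by
    simpa using ((hexp' t).const_sub 1).div_const (Real.exp 1 - 1)
  have h2 : HasDerivAt (fun t : ℝ => 1 + t / (Real.exp 1 - 1)) (1 / (Real.exp 1 - 1)) t := by
    simpa using ((hasDerivAt_id t).div_const (Real.exp 1 - 1)).const_add 1
  have h := (h1.add (h2.mul (hexp' t))).sub_const 1
  have heq : Real.exp (-t) / (Real.exp 1 - 1) +
      (1 / (Real.exp 1 - 1) * Real.exp (-t) + (1 + t / (Real.exp 1 - 1)) * -Real.exp (-t)) =
      Real.exp (-t) * (3 - Real.exp 1 - t) / (Real.exp 1 - 1) := by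
    field_simp [ne_of_gt he1]
    ring
  rw [← heq]
  exact h
 
lemma hg_deriv' (t : ℝ) :
    HasDerivAt (deriv f) (Real.exp (-t) * (3 - Real.exp 1 - t) / (Real.exp 1 - 1)) t := by
  rw [deriv_f_eq]; exact hg_deriv t

lemma deriv_g_eq (t : ℝ) :
    deriv g t = Real.exp (-t) * (3 - Real.exp 1 - t) / (Real.exp 1 - 1) := (hg_deriv t).deriv

lemma g_zero : g 0 = 0 := by simp [g]

lemma he3 : Real.exp 1 < 3 := by have := Real.exp_one_lt_d9; linarith
lemma he2 : (2:ℝ) < Real.exp 1 := by have := Real.exp_one_gt_d9; linarith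

lemma g_nonneg : ∀ t ∈ Set.Icc (0:ℝ) (3 - Real.exp 1), 0 ≤ g t := by
  intro t ht
  have hmono : MonotoneOn g (Set.Icc (0:ℝ) (3 - Real.exp 1)) := by
    apply monotoneOn_of_deriv_nonneg (convex_Icc _ _)
      (fun x _ => (hg_deriv x).differentiableAt.continuousAt.continuousWithinAt)
      (fun x _ => (hg_deriv x).differentiableAt.differentiableWithinAt)
    intro x hx
    rw [interior_Icc] at hx
    rw [deriv_g_eq]
    have h3 : 0 ≤ 3 - Real.exp 1 - x := by linarith [hx.2]
    exact div_nonneg (mul_nonneg (Real.exp_pos _).le h3) he1.le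
  have h0 : (0:ℝ) ∈ Set.Icc (0:ℝ) (3 - Real.exp 1) := by
    constructor <;> [rfl; linarith [he3]]
  calc 0 = g 0 := g_zero.symm
    _ ≤ g t := hmono h0 ht ht.1

lemma f_mono : MonotoneOn f (Set.Icc (0:ℝ) (3 - Real.exp 1)) := by
  apply monotoneOn_of_deriv_nonneg (convex_Icc _ _)
    (fun x _ => (hf_deriv x).differentiableAt.continuousAt.continuousWithinAt)
    (fun x _ => (hf_deriv x).differentiableAt.differentiableWithinAt)
  intro x hx
  rw [interior_Icc] at hx
  rw [deriv_f_eq]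
  exact g_nonneg x ⟨le_of_lt hx.1, le_of_lt hx.2⟩

lemma f_zero : f 0 = 0 := by simp [f]

lemma f_one : f 1 = 0 := by
  have h : Real.exp (-1 : ℝ) = (Real.exp 1)⁻¹ := by rw [Real.exp_neg]
  have he : Real.exp 1 ≠ 0 := (Real.exp_pos 1).ne'
  have he1' : Real.exp 1 - 1 ≠ 0 := ne_of_gt he1
  unfold f
  rw [h]
  field_simp
  ring

theorem f_properties :
    f 0 = 0 ∧ HasDerivAt f 0 0 ∧
      (∀ t : ℝ, HasDerivAt (deriv f)
        (Real.exp (-t) * (3 - Real.exp 1 - t) / (Real.exp 1 - 1)) t) ∧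
      ConvexOn ℝ (Set.Icc (0:ℝ) (3 - Real.exp 1)) f ∧
      ConcaveOn ℝ (Set.Icc (3 - Real.exp 1) 1) f ∧
      ∀ t ∈ Set.Icc (0:ℝ) 1, 0 ≤ f t := by
  have hconv : ConvexOn ℝ (Set.Icc (0:ℝ) (3 - Real.exp 1)) f := by
    apply convexOn_of_deriv2_nonneg' (convex_Icc _ _)
      (fun x _ => (hf_deriv x).differentiableAt.differentiableWithinAt)
      (fun x _ => (hg_deriv' x).differentiableAt.differentiableWithinAt)
    intro x hx
    simp only [Function.iterate_succ, Function.iterate_zero, Function.comp_apply, id_eq]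
    rw [(hg_deriv' x).deriv]
    have h3 : 0 ≤ 3 - Real.exp 1 - x := by linarith [hx.2]
    exact div_nonneg (mul_nonneg (Real.exp_pos _).le h3) he1.le
  have hconc : ConcaveOn ℝ (Set.Icc (3 - Real.exp 1) 1) f := by
    apply concaveOn_of_deriv2_nonpos' (convex_Icc _ _)
      (fun x _ => (hf_deriv x).differentiableAt.differentiableWithinAt)
      (fun x _ => (hg_deriv' x).differentiableAt.differentiableWithinAt)
    intro x hx
    simp only [Function.iterate_succ, Function.iterate_zero, Function.comp_apply, id_eq]
    rw [(hg_deriv' x).deriv]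
    have h1 : 3 - Real.exp 1 - x ≤ 0 := by linarith [hx.1]
    have h2 : (0:ℝ) < Real.exp (-x) := Real.exp_pos _
    have := he1
    apply div_nonpos_of_nonpos_of_nonneg
    · exact mul_nonpos_of_nonneg_of_nonpos h2.le h1
    · linarith
  have hf3e : 0 ≤ f (3 - Real.exp 1) := by
    have h0 : (0:ℝ) ∈ Set.Icc (0:ℝ) (3 - Real.exp 1) := ⟨le_refl _, by linarith [he3]⟩
    have h1 : (3 - Real.exp 1) ∈ Set.Icc (0:ℝ) (3 - Real.exp 1) :=
      ⟨by linarith [he3], le_refl _⟩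
    calc 0 = f 0 := f_zero.symm
      _ ≤ f (3 - Real.exp 1) := f_mono h0 h1 (by linarith [he3])
  refine ⟨f_zero, ?_, hg_deriv', hconv, hconc, ?_⟩
  · have := hf_deriv 0
    rwa [g_zero] at this
  · intro t ht
    by_cases h : t ≤ 3 - Real.exp 1
    · have h0 : (0:ℝ) ∈ Set.Icc (0:ℝ) (3 - Real.exp 1) := ⟨le_refl _, by linarith [he3]⟩
      calc 0 = f 0 := f_zero.symm
        _ ≤ f t := f_mono h0 ⟨ht.1, h⟩ ht.1
    · push_neg at h
      have hd : (0:ℝ) < Real.exp 1 - 2 := by linarith [he2]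
      set a : ℝ := (1 - t) / (Real.exp 1 - 2) with ha
      set b : ℝ := (t - 3 + Real.exp 1) / (Real.exp 1 - 2) with hb
      have hane : 0 ≤ a := div_nonneg (by linarith [ht.2]) hd.le
      have hbne : 0 ≤ b := div_nonneg (by linarith) hd.le
      have hab : a + b = 1 := by
        rw [ha, hb, ← add_div, div_eq_iff (ne_of_gt hd)]
        ring
      have hx : (3 - Real.exp 1) ∈ Set.Icc (3 - Real.exp 1) (1:ℝ) :=
        ⟨le_refl _, by linarith [he2]⟩
      have hy : (1:ℝ) ∈ Set.Icc (3 - Real.exp 1) (1:ℝ) := ⟨by linarith [he2], le_refl _⟩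
      have hcomb := hconc.2 hx hy hane hbne hab
      have hpt : a • (3 - Real.exp 1) + b • (1:ℝ) = t := by
        rw [ha, hb, smul_eq_mul, smul_eq_mul, div_mul_eq_mul_div, div_mul_eq_mul_div,
          ← add_div, div_eq_iff (ne_of_gt hd)]
        ring
      rw [hpt] at hcomb
      have : 0 ≤ a • f (3 - Real.exp 1) + b • f 1 := by
        rw [f_one]
        simpa using mul_nonneg hane hf3e
      linarith
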